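/- Let C be a set of relations, X a C-pattern, λ = (x_{n1},...,x_{nn}), μ = (w_1(X),...,w_n(X)). The dimension of the minimal face of P_C(λ,μ) containing X equals the dimension of the kernel of the tiling matrix A_{M_C(X)}. -/

import Mathlib

open scoped BigOperators

namespace GT

/-- Index set 𝔙 = {(i,j) : 1 ≤ j ≤ i ≤ n}, encoded 0-based:
`p.val.1` is the (0-based) row, `p.val.2` the (0-based) column. -/
abbrev Idx (n : ℕ) := {p : Fin n × Fin n // p.2 ≤ p.1}

/-- Points of ℝ^{n(n+1)/2}, entries indexed by `Idx n`. -/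
abbrev Pattern (n : ℕ) := Idx n → ℝ

/-- A set of relations is a set of pairs of indices. -/
abbrev Rels (n : ℕ) := Set (Idx n × Idx n)

/-- `X` is a `C`-pattern iff `x_{ij} ≥ x_{rs}` for all `((i,j);(r,s)) ∈ C`. -/
def IsPattern {n : ℕ} (C : Rels n) (X : Pattern n) : Prop :=
  ∀ pr ∈ C, X pr.2 ≤ X pr.1

/-- The polyhedron `P_C` of all `C`-patterns. -/
def PC {n : ℕ} (C : Rels n) : Set (Pattern n) := {X | IsPattern C X}

/-- 0-based row of a vertex; paper row `i` corresponds to `row p = i - 1`,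
so the top row (paper row `n`) is `row p = n - 1`. -/
def row {n : ℕ} (p : Idx n) : ℕ := p.val.1.val

/-- `P_C(λ)` : `C`-patterns whose top row equals `λ`. -/
def PCl {n : ℕ} (C : Rels n) (lam : Fin n → ℝ) : Set (Pattern n) :=
  {X | IsPattern C X ∧ ∀ p : Idx n, row p = n - 1 → X p = lam p.val.2}

/-- `R_k(X) = Σ_{i=1}^k x_{ki}` (paper row `k` is 0-based row `k-1`). -/
def Rk {n : ℕ} (X : Pattern n) (k : Fin n) : ℝ :=
  ∑ j : Fin n, if h : j ≤ k then X ⟨(k, j), h⟩ else 0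

/-- The `k`-th weight map: `w_1(X) = x_{11}` and `w_k(X) = R_k(X) - R_{k-1}(X)`. -/
def wk {n : ℕ} (X : Pattern n) (k : Fin n) : ℝ :=
  Rk X k - (if _ : 0 < k.val then
    Rk X ⟨k.val - 1, Nat.lt_of_le_of_lt (Nat.sub_le _ _) k.isLt⟩ else 0)

/-- `P_C(λ,μ)` : elements of `P_C(λ)` with weights `μ`. -/
def PClm {n : ℕ} (C : Rels n) (lam mu : Fin n → ℝ) : Set (Pattern n) :=
  {X | X ∈ PCl C lam ∧ ∀ k : Fin n, wk X k = mu k}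

/-- Edges of the (undirected) graph `G(C)` along which the entries of `X` agree. -/
def edge {n : ℕ} (C : Rels n) (X : Pattern n) (p q : Idx n) : Prop :=
  ((p, q) ∈ C ∨ (q, p) ∈ C) ∧ X p = X q

/-- `(i,j)` and `(r,s)` are in the same tile of the tiling `M_C(X)` iff they are
joined by a walk in `G(C)` along which all entries of `X` are equal. -/
def sameTile {n : ℕ} (C : Rels n) (X : Pattern n) : Idx n → Idx n → Prop :=
  Relation.EqvGen (edge C X)

/-- The tile of `M_C(X)` containing `p`. -/
def tile {n : ℕ} (C : Rels n) (X : Pattern n) (p : Idx n) : Set (Idx n) :=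
  {q | sameTile C X p q}

/-- The set of tiles of the tiling `M_C(X)`. -/
def tiles {n : ℕ} (C : Rels n) (X : Pattern n) : Set (Set (Idx n)) :=
  {T | ∃ p, T = tile C X p}

/-- A tile is `Λ₁`-free if it contains no vertex in the top row `n`. -/
def L1free {n : ℕ} (T : Set (Idx n)) : Prop := ∀ q ∈ T, row q ≠ n - 1

/-- A tile is `Λ₂`-free if it contains no vertex in row `1` nor in the top row `n`. -/
def L2free {n : ℕ} (T : Set (Idx n)) : Prop := ∀ q ∈ T, row q ≠ n - 1 ∧ row q ≠ 0

/-- `D_X(P) = {Y : X + Y ∈ P and X - Y ∈ P}`. -/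
def DX {E : Type*} [AddCommGroup E] (P : Set E) (x : E) : Set E :=
  {y | x + y ∈ P ∧ x - y ∈ P}

/-- `𝔙(C)` : vertices that are source or target of a relation of `C`. -/
def VC {n : ℕ} (C : Rels n) : Set (Idx n) := {p | ∃ q, (p, q) ∈ C ∨ (q, p) ∈ C}

/-- Existence of a directed path in `G(C)`, i.e. `p ⪰_C q`. -/
def pathTo {n : ℕ} (C : Rels n) : Idx n → Idx n → Prop :=
  Relation.ReflTransGen (fun p q => (p, q) ∈ C)

/-- `C` is top-connected if every vertex of `𝔙(C)` not in the top row has a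
directed path to some vertex in the top row. -/
def TopConnected {n : ℕ} (C : Rels n) : Prop :=
  ∀ p ∈ VC C, row p ≠ n - 1 → ∃ r : Idx n, row r = n - 1 ∧ pathTo C p r

/-- `𝒫⁺` : points of `𝒫` with nonnegative entries on `𝔙(C)`. -/
def Pplus {n : ℕ} (C : Rels n) (P : Set (Pattern n)) : Set (Pattern n) :=
  {X ∈ P | ∀ p ∈ VC C, 0 ≤ X p}

section Faces

variable {E : Type*} [AddCommGroup E] [Module ℝ E]

/-- A polyhedron: an intersection of finitely many closed halfspaces. -/
def IsPolyhedron (P : Set E) : Prop :=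
  ∃ (k : ℕ) (f : Fin k → E →ₗ[ℝ] ℝ) (c : Fin k → ℝ), P = {x | ∀ i, f i x ≤ c i}

/-- A face of `P`: either `P` itself, or the intersection of `P` with a
supporting hyperplane. -/
def IsFace (P F : Set E) : Prop :=
  F = P ∨ ∃ (f : E →ₗ[ℝ] ℝ) (c : ℝ), f ≠ 0 ∧ (∀ x ∈ P, f x ≤ c) ∧
    (∃ x ∈ P, f x = c) ∧ F = {x ∈ P | f x = c}

/-- The dimension of a face: the dimension of its affine span. -/
noncomputable def faceDim (F : Set E) : ℕ :=
  Module.finrank ℝ (affineSpan ℝ F).direction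

/-- `F` is the minimal face of `P` containing `x`. -/
def IsMinFace (P F : Set E) (x : E) : Prop :=
  IsFace P F ∧ x ∈ F ∧ ∀ F', IsFace P F' → x ∈ F' → F ⊆ F'

end Faces

end GT

section Aux

open GT

variable {n : ℕ}

lemma sameTile_symm {C : Rels n} {X : Pattern n} {p q : Idx n}
    (h : sameTile C X p q) : sameTile C X q p := Relation.EqvGen.symm _ _ h

lemma sameTile_trans {C : Rels n} {X : Pattern n} {p q r : Idx n}
    (h : sameTile C X p q) (h' : sameTile C X q r) : sameTile C X p r :=
  Relation.EqvGen.trans _ _ _ h h'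

lemma sameTile_X {C : Rels n} {X : Pattern n} {p q : Idx n}
    (h : sameTile C X p q) : X p = X q := by
  induction h with
  | rel _ _ h => exact h.2
  | refl => rfl
  | symm _ _ _ ih => exact ih.symm
  | trans _ _ _ _ _ ih1 ih2 => exact ih1.trans ih2

lemma mem_tile_self {C : Rels n} {X : Pattern n} (p : Idx n) :
    p ∈ tile C X p := Relation.EqvGen.refl p

lemma Rk_add (D E : Pattern n) (k : Fin n) :
    Rk (D + E) k = Rk D k + Rk E k := by
  unfold Rk
  rw [← Finset.sum_add_distrib]
  refine Finset.sum_congr rfl fun j _ => ?_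
  split <;> simp

lemma Rk_smul (c : ℝ) (D : Pattern n) (k : Fin n) :
    Rk (c • D) k = c * Rk D k := by
  unfold Rk
  rw [Finset.mul_sum]
  refine Finset.sum_congr rfl fun j _ => ?_
  split <;> simp

lemma Rk_sub (D E : Pattern n) (k : Fin n) :
    Rk (D - E) k = Rk D k - Rk E k := by
  unfold Rk
  rw [← Finset.sum_sub_distrib]
  refine Finset.sum_congr rfl fun j _ => ?_
  split <;> simp

lemma Rk_eq_of_wk {Y Z : Pattern n} (hw : ∀ k : Fin n, wk Y k = wk Z k) :
    ∀ k : Fin n, Rk Y k = Rk Z k := by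
  have key : ∀ m : ℕ, ∀ k : Fin n, k.val = m → Rk Y k = Rk Z k := by
    intro m
    induction m with
    | zero =>
      intro k hk
      have := hw k
      rw [wk, wk, dif_neg (by omega), dif_neg (by omega)] at this
      linarith
    | succ j ih =>
      intro k hk
      have hlt : 0 < k.val := by omega
      have := hw k
      rw [wk, wk, dif_pos hlt, dif_pos hlt] at this
      have h2 := ih ⟨k.val - 1, Nat.lt_of_le_of_lt (Nat.sub_le _ _) k.isLt⟩ (show k.val - 1 = j by omega)
      linarith
  intro k
  exact key k.val k rfl

lemma Rk_eq_zero_of_row {D : Pattern n} {k : Fin n}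
    (h : ∀ j : Fin n, ∀ hj : j ≤ k, D ⟨(k, j), hj⟩ = 0) : Rk D k = 0 := by
  unfold Rk
  refine Finset.sum_eq_zero fun j _ => ?_
  split
  · exact h j ‹_›
  · rfl

/-- `Rk` as a sum over all vertices in the given row. -/
lemma Rk_eq_filter (D : Pattern n) (k : Fin n) :
    Rk D k = ∑ p ∈ Finset.univ.filter (fun p : Idx n => row p = k.val), D p := by
  classical
  unfold Rk
  rw [← Finset.sum_filter_add_sum_filter_not Finset.univ (fun j : Fin n => j ≤ k)]
  have h2 : ∑ j ∈ Finset.univ.filter (fun j : Fin n => ¬ j ≤ k),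
      (if h : j ≤ k then D ⟨(k, j), h⟩ else 0) = 0 :=
    Finset.sum_eq_zero fun j hj => dif_neg (Finset.mem_filter.mp hj).2
  rw [h2, add_zero]
  refine Finset.sum_bij' (fun j hj => (⟨(k, j), (Finset.mem_filter.mp hj).2⟩ : Idx n))
    (fun p _ => p.val.2) ?_ ?_ ?_ ?_ ?_
  · intro j hj
    exact Finset.mem_filter.mpr ⟨Finset.mem_univ _, rfl⟩
  · intro p hp
    have hp' := (Finset.mem_filter.mp hp).2
    simp only [Finset.mem_filter, Finset.mem_univ, true_and]
    have : p.val.1 = k := Fin.ext hp'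
    exact this ▸ p.2
  · intro j hj; rfl
  · intro p hp
    have hp' := (Finset.mem_filter.mp hp).2
    have : p.val.1 = k := Fin.ext hp'
    exact Subtype.ext (Prod.ext this.symm rfl)
  · intro j hj
    rw [dif_pos (Finset.mem_filter.mp hj).2]

end Aux

section Aux2

open GT

variable {n : ℕ}

/-- The candidate direction space of the minimal face. -/
def Wsub (C : Rels n) (X : Pattern n) : Submodule ℝ (Pattern n) where
  carrier := {D | (∀ p q, sameTile C X p q → D p = D q) ∧
    (∀ p, row p = n - 1 → D p = 0) ∧ ∀ k : Fin n, Rk D k = 0}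
  add_mem' := by
    rintro D E ⟨h1, h2, h3⟩ ⟨h1', h2', h3'⟩
    refine ⟨fun p q h => by simp only [Pi.add_apply, h1 p q h, h1' p q h],
      fun p h => by simp only [Pi.add_apply, h2 p h, h2' p h, add_zero],
      fun k => by rw [Rk_add, h3, h3', add_zero]⟩
  zero_mem' :=
    ⟨fun _ _ _ => rfl, fun _ _ => rfl, fun k => Rk_eq_zero_of_row fun _ _ => rfl⟩
  smul_mem' := by
    rintro c D ⟨h1, h2, h3⟩
    refine ⟨fun p q h => by simp only [Pi.smul_apply, h1 p q h],
      fun p h => by simp only [Pi.smul_apply, h2 p h, smul_zero],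
      fun k => by rw [Rk_smul, h3, mul_zero]⟩

lemma mem_Wsub {C : Rels n} {X D : Pattern n} :
    D ∈ Wsub C X ↔ (∀ p q, sameTile C X p q → D p = D q) ∧
      (∀ p, row p = n - 1 → D p = 0) ∧ ∀ k : Fin n, Rk D k = 0 := Iff.rfl

lemma face_subset {E : Type*} [AddCommGroup E] [Module ℝ E] {P F : Set E}
    (h : IsFace P F) : F ⊆ P := by
  rcases h with rfl | ⟨f, c, _, _, _, rfl⟩
  · exact subset_rfl
  · exact fun x hx => hx.1

lemma face_mem_of_mid {E : Type*} [AddCommGroup E] [Module ℝ E] {P F : Set E}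
    (h : IsFace P F) {x y : E} (hx : x ∈ F) (h1 : x + y ∈ P) (h2 : x - y ∈ P) :
    x + y ∈ F ∧ x - y ∈ F := by
  rcases h with rfl | ⟨f, c, _, hb, _, rfl⟩
  · exact ⟨h1, h2⟩
  · obtain ⟨hxP, hxc⟩ := hx
    have a1 := hb _ h1
    have a2 := hb _ h2
    rw [map_add, hxc] at a1
    rw [map_sub, hxc] at a2
    exact ⟨⟨h1, by rw [map_add, hxc]; linarith⟩, ⟨h2, by rw [map_sub, hxc]; linarith⟩⟩

lemma tight_eq_on_face {C : Rels n} {X : Pattern n} {lam mu : Fin n → ℝ}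
    {F : Set (Pattern n)} (hF : IsMinFace (PClm C lam mu) F X)
    (hXP : X ∈ PClm C lam mu)
    {p q : Idx n} (hpq : (p, q) ∈ C) (hXeq : X p = X q) :
    ∀ Y ∈ F, Y q = Y p := by
  by_cases hne : p = q
  · subst hne; intro Y _; rfl
  · set f : Pattern n →ₗ[ℝ] ℝ :=
      (LinearMap.proj q : Pattern n →ₗ[ℝ] ℝ) - LinearMap.proj p with hf
    have hf0 : f ≠ 0 := by
      intro h0
      have := congrArg (fun g => g (Pi.single q (1 : ℝ))) h0
      simp only [hf, LinearMap.sub_apply, LinearMap.proj_apply, LinearMap.zero_apply,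
        Pi.single_eq_same, Pi.single_eq_of_ne (Ne.symm (by exact fun h => hne h.symm) : p ≠ q)] at this
      linarith
    have hface : IsFace (PClm C lam mu) {Z ∈ PClm C lam mu | f Z = 0} := by
      refine Or.inr ⟨f, 0, hf0, ?_, ⟨X, hXP, ?_⟩, rfl⟩
      · intro Z hZ
        have := hZ.1.1 (p, q) hpq
        simp only [hf, LinearMap.sub_apply, LinearMap.proj_apply]
        linarith
      · simp only [hf, LinearMap.sub_apply, LinearMap.proj_apply]
        linarith [hXeq]
    have hsub := hF.2.2 _ hface ⟨hXP, by
      simp only [hf, LinearMap.sub_apply, LinearMap.proj_apply]; linarith [hXeq]⟩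
    intro Y hY
    have := (hsub hY).2
    simp only [hf, LinearMap.sub_apply, LinearMap.proj_apply] at this
    linarith

lemma const_on_tile_of_face {C : Rels n} {X : Pattern n} {lam mu : Fin n → ℝ}
    {F : Set (Pattern n)} (hF : IsMinFace (PClm C lam mu) F X)
    (hXP : X ∈ PClm C lam mu) {Y : Pattern n} (hY : Y ∈ F) :
    ∀ p q, sameTile C X p q → Y p = Y q := by
  intro p q h
  induction h with
  | rel a b hab =>
    rcases hab.1 with h1 | h1
    · exact (tight_eq_on_face hF hXP h1 hab.2 Y hY).symm
    · exact tight_eq_on_face hF hXP h1 hab.2.symm Y hY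
  | refl => rfl
  | symm _ _ _ ih => exact ih.symm
  | trans _ _ _ _ _ ih1 ih2 => exact ih1.trans ih2

lemma exists_eps {C : Rels n} {X D : Pattern n} (hX : IsPattern C X)
    (hD : ∀ p q, sameTile C X p q → D p = D q) :
    ∃ ε : ℝ, 0 < ε ∧ ∀ pr ∈ C, (X pr.2 + ε * D pr.2 ≤ X pr.1 + ε * D pr.1) ∧
      (X pr.2 - ε * D pr.2 ≤ X pr.1 - ε * D pr.1) := by
  classical
  set g : Idx n × Idx n → ℝ := fun pr =>
    if X pr.2 < X pr.1 then (X pr.1 - X pr.2) / (1 + |D pr.1 - D pr.2|) else 1 with hg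
  set T : Finset ℝ := insert 1 (Finset.univ.image g) with hT
  have hTne : T.Nonempty := ⟨1, Finset.mem_insert_self _ _⟩
  set ε := T.min' hTne with he
  have hpos : 0 < ε := by
    rw [he, Finset.lt_min'_iff]
    intro x hx
    rcases Finset.mem_insert.mp hx with rfl | hx
    · norm_num
    · obtain ⟨pr, _, rfl⟩ := Finset.mem_image.mp hx
      by_cases h : X pr.2 < X pr.1
      · rw [hg]; simp only [if_pos h]
        exact div_pos (sub_pos.2 h) (by positivity)
      · rw [hg]; simp only [if_neg h]; norm_num
  refine ⟨ε, hpos, fun pr hpr => ?_⟩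
  have hle := hX pr hpr
  rcases eq_or_lt_of_le hle with heq | hlt
  · have hst : sameTile C X pr.1 pr.2 :=
      Relation.EqvGen.rel _ _ ⟨Or.inl (by rw [Prod.mk.eta]; exact hpr), heq.symm⟩
    have hd := hD _ _ hst
    constructor <;> rw [hd, heq]
  · have hεg : ε ≤ g pr := Finset.min'_le _ _
      (Finset.mem_insert_of_mem (Finset.mem_image_of_mem g (Finset.mem_univ pr)))
    have h2 : (0:ℝ) < 1 + |D pr.1 - D pr.2| := by positivity
    have habs : ε * |D pr.1 - D pr.2| ≤ X pr.1 - X pr.2 := by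
      rw [hg] at hεg
      simp only [if_pos hlt] at hεg
      rw [le_div_iff₀ h2] at hεg
      nlinarith [abs_nonneg (D pr.1 - D pr.2), hpos]
    constructor
    · have : ε * (D pr.2 - D pr.1) ≤ ε * |D pr.1 - D pr.2| := by
        rw [abs_sub_comm]
        exact mul_le_mul_of_nonneg_left (le_abs_self _) hpos.le
      nlinarith
    · have : ε * (D pr.1 - D pr.2) ≤ ε * |D pr.1 - D pr.2| :=
        mul_le_mul_of_nonneg_left (le_abs_self _) hpos.le
      nlinarith

lemma counting {s : ℕ} {M : Fin s → Set (Idx n)}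
    (huniq : ∀ (p : Idx n) k k', p ∈ M k → p ∈ M k' → k = k')
    (pt : Fin s → Idx n) (D : Pattern n)
    (hc : ∀ k, ∀ q ∈ M k, D q = D (pt k))
    (h0 : ∀ p : Idx n, (∀ k, p ∉ M k) → D p = 0)
    (i : Fin n) :
    Rk D i = ∑ k : Fin s, ({p : Idx n | row p = i.val ∧ p ∈ M k}.ncard : ℝ) * D (pt k) := by
  classical
  rw [Rk_eq_filter]
  have hstep : ∀ p : Idx n, D p = ∑ k : Fin s, if p ∈ M k then D (pt k) else 0 := by
    intro p
    by_cases h : ∃ k, p ∈ M k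
    · obtain ⟨k0, hk0⟩ := h
      rw [Finset.sum_eq_single k0]
      · rw [if_pos hk0]; exact hc k0 p hk0
      · intro k _ hk
        exact if_neg (fun hmem => hk (huniq p k k0 hmem hk0))
      · intro h; exact absurd (Finset.mem_univ k0) h
    · push_neg at h
      rw [h0 p h]
      exact (Finset.sum_eq_zero fun k _ => if_neg (h k)).symm
  rw [Finset.sum_congr rfl fun p _ => hstep p, Finset.sum_comm]
  refine Finset.sum_congr rfl fun k _ => ?_
  have hset : {p : Idx n | row p = i.val ∧ p ∈ M k} =
      ↑(Finset.univ.filter fun p : Idx n => row p = i.val ∧ p ∈ M k) := by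
    ext p; simp
  rw [← Finset.sum_filter, Finset.sum_const, Finset.filter_filter, hset,
    Set.ncard_coe_finset, nsmul_eq_mul]

end Aux2

/-- Theorem dimI (iii): the dimension of the minimal face of
`P_C(λ,μ)` containing `X` equals the dimension of the kernel of the tiling
matrix `A_{M_C(X)}` (rows indexed by paper rows `1,…,n-1`, columns by the
`Λ₁`-free tiles `M_1,…,M_s`). -/
theorem stmt13 {n : ℕ} (C : GT.Rels n) (X : GT.Pattern n) (hX : GT.IsPattern C X)
    (lam mu : Fin n → ℝ)
    (hlam : ∀ p : GT.Idx n, GT.row p = n - 1 → X p = lam p.val.2)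
    (hmu : ∀ k : Fin n, GT.wk X k = mu k)
    (s : ℕ) (M : Fin s → Set (GT.Idx n)) (hMinj : Function.Injective M)
    (hM : ∀ k, M k ∈ GT.tiles C X ∧ GT.L1free (M k))
    (hMall : ∀ T ∈ GT.tiles C X, GT.L1free T → ∃ k, T = M k)
    (A : Matrix (Fin (n - 1)) (Fin s) ℝ)
    (hA : ∀ i k, A i k = ({p : GT.Idx n | GT.row p = i.val ∧ p ∈ M k}.ncard : ℝ))
    (F : Set (GT.Pattern n)) (hF : GT.IsMinFace (GT.PClm C lam mu) F X) :
    GT.faceDim F = Module.finrank ℝ (LinearMap.ker A.mulVecLin) := by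
  classical
  have hXP : X ∈ GT.PClm C lam mu := ⟨⟨hX, hlam⟩, hmu⟩
  -- basic tile facts
  have tile_eq : ∀ p q : GT.Idx n, GT.sameTile C X p q → GT.tile C X p = GT.tile C X q := by
    intro p q h
    ext r
    exact ⟨fun hr => sameTile_trans (sameTile_symm h) hr, fun hr => sameTile_trans h hr⟩
  have hMem : ∀ k (p : GT.Idx n), p ∈ M k → M k = GT.tile C X p := by
    intro k p hp
    obtain ⟨q, hq⟩ := (hM k).1
    rw [hq] at hp ⊢
    exact tile_eq q p hp
  have huniq : ∀ (p : GT.Idx n) k k', p ∈ M k → p ∈ M k' → k = k' := by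
    intro p k k' h h'
    exact hMinj ((hMem k p h).trans (hMem k' p h').symm)
  have hptE : ∀ k, ∃ p, p ∈ M k := by
    intro k
    obtain ⟨q, hq⟩ := (hM k).1
    exact ⟨q, hq ▸ mem_tile_self q⟩
  choose pt hpt using hptE
  have hzero : ∀ D : GT.Pattern n, (∀ p q, GT.sameTile C X p q → D p = D q) →
      (∀ p, GT.row p = n - 1 → D p = 0) →
      ∀ p : GT.Idx n, (∀ k, p ∉ M k) → D p = 0 := by
    intro D h1 h2 p hp
    by_cases hfree : GT.L1free (GT.tile C X p)
    · obtain ⟨k, hk⟩ := hMall _ ⟨p, rfl⟩ hfree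
      exact absurd (hk ▸ mem_tile_self p) (hp k)
    · simp only [GT.L1free, not_forall] at hfree
      obtain ⟨q, hq, hrow⟩ := hfree
      rw [h1 p q hq]
      exact h2 q (not_not.mp hrow)
  -- direction of the affine span of F equals Wsub
  have hdirle : (affineSpan ℝ F).direction ≤ Wsub C X := by
    rw [direction_affineSpan, vectorSpan_def]
    refine Submodule.span_le.mpr ?_
    intro v hv
    rw [Set.mem_vsub] at hv
    obtain ⟨Y, hY, Z, hZ, rfl⟩ := hv
    have hYP := face_subset hF.1 hY
    have hZP := face_subset hF.1 hZ
    refine ⟨?_, ?_, ?_⟩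
    · intro p q h
      have hYc := const_on_tile_of_face hF hXP hY p q h
      have hZc := const_on_tile_of_face hF hXP hZ p q h
      show Y p - Z p = Y q - Z q
      rw [hYc, hZc]
    · intro p hp
      show Y p - Z p = 0
      rw [hYP.1.2 p hp, hZP.1.2 p hp, sub_self]
    · intro k
      have hw : ∀ k : Fin n, GT.wk Y k = GT.wk Z k := fun k => (hYP.2 k).trans (hZP.2 k).symm
      have := Rk_eq_of_wk hw k
      show GT.Rk (Y - Z) k = 0
      rw [Rk_sub]
      linarith
  have hdirge : Wsub C X ≤ (affineSpan ℝ F).direction := by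
    intro D hD
    obtain ⟨h1, h2, h3⟩ := hD
    obtain ⟨ε, hε, hbound⟩ := exists_eps hX h1
    have hRkp : ∀ k : Fin n, GT.Rk (X + ε • D) k = GT.Rk X k := by
      intro k
      rw [Rk_add, Rk_smul, h3, mul_zero, add_zero]
    have hRkm : ∀ k : Fin n, GT.Rk (X - ε • D) k = GT.Rk X k := by
      intro k
      rw [Rk_sub, Rk_smul, h3, mul_zero, sub_zero]
    have hplus : X + ε • D ∈ GT.PClm C lam mu := by
      refine ⟨⟨?_, ?_⟩, ?_⟩
      · intro pr hpr
        have := (hbound pr hpr).1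
        simpa [smul_eq_mul] using this
      · intro p hp
        show X p + ε * D p = lam p.val.2
        rw [h2 p hp, mul_zero, add_zero]
        exact hlam p hp
      · intro k
        rw [← hmu k]
        unfold GT.wk
        rw [hRkp]
        congr 1
        split
        · rw [hRkp]
        · rfl
    have hminus : X - ε • D ∈ GT.PClm C lam mu := by
      refine ⟨⟨?_, ?_⟩, ?_⟩
      · intro pr hpr
        have := (hbound pr hpr).2
        simpa [smul_eq_mul] using this
      · intro p hp
        show X p - ε * D p = lam p.val.2
        rw [h2 p hp, mul_zero, sub_zero]
        exact hlam p hp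
      · intro k
        rw [← hmu k]
        unfold GT.wk
        rw [hRkm]
        congr 1
        split
        · rw [hRkm]
        · rfl
    obtain ⟨hmemp, -⟩ := face_mem_of_mid hF.1 hF.2.1 hplus hminus
    rw [direction_affineSpan]
    have hv : ε • D ∈ vectorSpan ℝ F := by
      rw [vectorSpan_def]
      have : (X + ε • D) -ᵥ X ∈ F -ᵥ F := Set.vsub_mem_vsub hmemp hF.2.1
      have he : (X + ε • D) -ᵥ X = ε • D := by
        rw [vsub_eq_sub, add_sub_cancel_left]
      exact Submodule.subset_span (he ▸ this)
    have := Submodule.smul_mem (vectorSpan ℝ F) ε⁻¹ hv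
    rwa [smul_smul, inv_mul_cancel₀ hε.ne', one_smul] at this
  have hdir : (affineSpan ℝ F).direction = Wsub C X := le_antisymm hdirle hdirge
  -- the comparison map with the kernel of A
  set φ : ↥(Wsub C X) →ₗ[ℝ] (Fin s → ℝ) :=
    (LinearMap.pi fun k => LinearMap.proj (pt k)).comp (Wsub C X).subtype with hφ
  have hφ_apply : ∀ (D : ↥(Wsub C X)) (k : Fin s), φ D k = (D : GT.Pattern n) (pt k) :=
    fun D k => rfl
  -- membership consequences
  have hconstM : ∀ (D : GT.Pattern n), (∀ p q, GT.sameTile C X p q → D p = D q) →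
      ∀ k, ∀ q ∈ M k, D q = D (pt k) := by
    intro D h1 k q hq
    have h := hMem k (pt k) (hpt k)
    have : q ∈ GT.tile C X (pt k) := h ▸ hq
    exact (h1 (pt k) q this).symm
  have hinj : Function.Injective φ := by
    rw [← LinearMap.ker_eq_bot, LinearMap.ker_eq_bot']
    intro D hD0
    obtain ⟨h1, h2, h3⟩ := D.2
    ext p
    show (D : GT.Pattern n) p = 0
    by_cases h : ∃ k, p ∈ M k
    · obtain ⟨k, hk⟩ := h
      rw [hconstM _ h1 k p hk]
      exact congrFun hD0 k
    · push_neg at h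
      exact hzero _ h1 h2 p h
  have hrange : LinearMap.range φ = LinearMap.ker A.mulVecLin := by
    apply le_antisymm
    · rintro v ⟨D, rfl⟩
      obtain ⟨h1, h2, h3⟩ := D.2
      rw [LinearMap.mem_ker]
      funext i
      have hi : (i.val : ℕ) < n := lt_of_lt_of_le i.isLt (Nat.sub_le n 1)
      have hcount := counting huniq pt ((D : GT.Pattern n))
        (hconstM _ h1) (hzero _ h1 h2) ⟨i.val, hi⟩
      rw [h3] at hcount
      have : A.mulVecLin (φ D) i = ∑ k : Fin s, A i k * (D : GT.Pattern n) (pt k) := by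
        simp [Matrix.mulVecLin_apply, Matrix.mulVec, dotProduct, hφ_apply]
      rw [this]
      rw [Finset.sum_congr rfl fun k _ => by rw [hA i k]]
      exact hcount.symm
    · intro v hv
      rw [LinearMap.mem_ker] at hv
      set D : GT.Pattern n := fun p => if h : ∃ k, p ∈ M k then v h.choose else 0 with hDdef
      have hDmem : ∀ (p : GT.Idx n) (k : Fin s), p ∈ M k → D p = v k := by
        intro p k hk
        rw [hDdef]
        have hex : ∃ k, p ∈ M k := ⟨k, hk⟩
        simp only [dif_pos hex]
        exact congrArg v (huniq p _ k hex.choose_spec hk)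
      have hDnone : ∀ p : GT.Idx n, (∀ k, p ∉ M k) → D p = 0 := by
        intro p hp
        rw [hDdef]
        exact dif_neg (by push_neg; exact hp)
      have h1 : ∀ p q, GT.sameTile C X p q → D p = D q := by
        intro p q h
        by_cases hex : ∃ k, p ∈ M k
        · obtain ⟨k, hk⟩ := hex
          have hq : q ∈ M k := (hMem k p hk) ▸ (show q ∈ GT.tile C X p from h)
          rw [hDmem p k hk, hDmem q k hq]
        · push_neg at hex
          have hexq : ∀ k, q ∉ M k := by
            intro k hk
            exact hex k ((hMem k q hk) ▸ (show p ∈ GT.tile C X q from sameTile_symm h))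
          rw [hDnone p hex, hDnone q hexq]
      have h2 : ∀ p, GT.row p = n - 1 → D p = 0 := by
        intro p hp
        refine hDnone p fun k hk => ?_
        exact (hM k).2 p hk hp
      have h3 : ∀ k : Fin n, GT.Rk D k = 0 := by
        intro k
        have hcount := counting huniq pt D (fun k' q hq => by
          rw [hDmem q k' hq, hDmem (pt k') k' (hpt k')]) hDnone k
        by_cases hk : k.val = n - 1
        · rw [hcount]
          refine Finset.sum_eq_zero fun k' _ => ?_
          have : {p : GT.Idx n | GT.row p = k.val ∧ p ∈ M k'} = ∅ := by
            ext p
            simp only [Set.mem_setOf_eq, Set.mem_empty_iff_false, iff_false, not_and]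
            intro hr hm
            exact (hM k').2 p hm (hk ▸ hr)
          rw [this]
          simp
        · have hklt : k.val < n - 1 := by omega
          have : GT.Rk D k = A.mulVec v ⟨k.val, hklt⟩ := by
            rw [hcount]
            simp only [Matrix.mulVec, dotProduct]
            refine Finset.sum_congr rfl fun k' _ => ?_
            rw [hA ⟨k.val, hklt⟩ k', hDmem (pt k') k' (hpt k')]
          rw [this]
          have := congrFun hv ⟨k.val, hklt⟩
          simpa [Matrix.mulVecLin_apply] using this
      refine ⟨⟨D, ⟨h1, h2, h3⟩⟩, ?_⟩
      funext k
      rw [hφ_apply]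
      exact hDmem (pt k) k (hpt k)
  -- conclude
  show Module.finrank ℝ (affineSpan ℝ F).direction = _
  rw [hdir, ← hrange]
  exact (LinearMap.finrank_range_of_inj hinj).symm
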